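/- For PathNim PN(5,3) (five stacks on a path; a move removes at least one token total from three consecutive stacks {1,2,3}, {2,3,4}, or {3,4,5}), the set of P-positions is exactly the set of positions having two consecutive zeros in the middle such that the sums on the two sides are equal: namely positions of the form (a, 0, 0, b₁, b₂) with a = b₁ + b₂, or (a₁, a₂, 0, 0, b) with a₁ + a₂ = b. -/
import Mathlib


/-- A legal move in SetNim: at least one stack strictly decreases, all changed
stacks lie in some allowed move set, stacks weakly decrease. -/
def Move {V : Type} (A : Set (Set V)) (p q : V → ℕ) : Prop :=
  q ≠ p ∧ (∀ i, q i ≤ p i) ∧ ∃ a ∈ A, ∀ i, q i ≠ p i → i ∈ a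

/-- P-positions: positions all of whose options are N-positions. -/
def PPos {V : Type} [Fintype V] (A : Set (Set V)) (p : V → ℕ) : Prop :=
  ∀ q, Move A p q → ¬ PPos A q
termination_by Finset.univ.sum p
decreasing_by
  rename_i hq
  obtain ⟨hne, hle, -⟩ := hq
  refine Finset.sum_lt_sum (fun i _ => hle i) ?_
  obtain ⟨i, hi⟩ := Function.ne_iff.mp hne
  exact ⟨i, Finset.mem_univ i, lt_of_le_of_ne (hle i) hi⟩

/-- Move sets of PathNim PN(5,3). -/
def PN53 : Set (Set (Fin 5)) := {{0, 1, 2}, {1, 2, 3}, {2, 3, 4}}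

/-- The claimed set of P-positions. -/
def Sp (p : Fin 5 → ℕ) : Prop :=
  (p 1 = 0 ∧ p 2 = 0 ∧ p 0 = p 3 + p 4) ∨ (p 2 = 0 ∧ p 3 = 0 ∧ p 0 + p 1 = p 4)

lemma ext5 {q p : Fin 5 → ℕ} (h0 : q 0 = p 0) (h1 : q 1 = p 1) (h2 : q 2 = p 2)
    (h3 : q 3 = p 3) (h4 : q 4 = p 4) : q = p := by
  funext i; fin_cases i <;> assumption

lemma move_sum_lt {A : Set (Set (Fin 5))} {p q : Fin 5 → ℕ} (h : Move A p q) :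
    Finset.univ.sum q < Finset.univ.sum p := by
  obtain ⟨hne, hle, -⟩ := h
  refine Finset.sum_lt_sum (fun i _ => hle i) ?_
  obtain ⟨i, hi⟩ := Function.ne_iff.mp hne
  exact ⟨i, Finset.mem_univ i, lt_of_le_of_ne (hle i) hi⟩

/-- Every move from a position in `Sp` leaves `Sp`. -/
lemma moveS {p q : Fin 5 → ℕ} (hp : Sp p) (h : Move PN53 p q) : ¬ Sp q := by
  obtain ⟨hne, hle, a, ha, hmem⟩ := h
  intro hq
  have hle0 := hle 0; have hle1 := hle 1; have hle2 := hle 2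
  have hle3 := hle 3; have hle4 := hle 4
  have ha' : a = {0,1,2} ∨ a = {1,2,3} ∨ a = {2,3,4} := by simpa [PN53] using ha
  apply hne
  rcases ha' with rfl | rfl | rfl
  · have e3 : q 3 = p 3 := by
      by_contra h'; have := hmem 3 h'; simp at this
    have e4 : q 4 = p 4 := by
      by_contra h'; have := hmem 4 h'; simp at this
    rcases hp with ⟨a1,a2,a3⟩ | ⟨a1,a2,a3⟩ <;> rcases hq with ⟨b1,b2,b3⟩ | ⟨b1,b2,b3⟩ <;>
      exact ext5 (by omega) (by omega) (by omega) (by omega) (by omega)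
  · have e0 : q 0 = p 0 := by
      by_contra h'; have := hmem 0 h'; simp at this
    have e4 : q 4 = p 4 := by
      by_contra h'; have := hmem 4 h'; simp at this
    rcases hp with ⟨a1,a2,a3⟩ | ⟨a1,a2,a3⟩ <;> rcases hq with ⟨b1,b2,b3⟩ | ⟨b1,b2,b3⟩ <;>
      exact ext5 (by omega) (by omega) (by omega) (by omega) (by omega)
  · have e0 : q 0 = p 0 := by
      by_contra h'; have := hmem 0 h'; simp at this
    have e1 : q 1 = p 1 := by
      by_contra h'; have := hmem 1 h'; simp at this
    rcases hp with ⟨a1,a2,a3⟩ | ⟨a1,a2,a3⟩ <;> rcases hq with ⟨b1,b2,b3⟩ | ⟨b1,b2,b3⟩ <;>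
      exact ext5 (by omega) (by omega) (by omega) (by omega) (by omega)

/-- From any position outside `Sp` there is a move into `Sp`. -/
lemma stratS {p : Fin 5 → ℕ} (hp : ¬ Sp p) : ∃ q, Move PN53 p q ∧ Sp q := by
  simp only [Sp, not_or, not_and_or] at hp
  by_cases hA : p 3 + p 4 ≤ p 0
  · refine ⟨![p 3 + p 4, 0, 0, p 3, p 4], ⟨?_, ?_, {0,1,2}, ?_, ?_⟩, ?_⟩
    · intro h
      have h0 := congrFun h 0; have h1 := congrFun h 1; have h2 := congrFun h 2
      simp at h0 h1 h2
      exact hp.1.elim (fun h => h h1.symm) (fun h => h.elim (fun h => h h2.symm) (fun h => h (by omega)))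
    · intro i; fin_cases i <;> simp <;> omega
    · simp [PN53]
    · intro i hi; fin_cases i <;> simp_all
    · left; simp
  · push_neg at hA
    by_cases hB : p 0 + p 1 ≤ p 4
    · refine ⟨![p 0, p 1, 0, 0, p 0 + p 1], ⟨?_, ?_, {2,3,4}, ?_, ?_⟩, ?_⟩
      · intro h
        have h2 := congrFun h 2; have h3 := congrFun h 3; have h4 := congrFun h 4
        simp at h2 h3 h4
        exact hp.2.elim (fun h => h h2.symm) (fun h => h.elim (fun h => h h3.symm) (fun h => h (by omega)))
      · intro i; fin_cases i <;> simp <;> omega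
      · simp [PN53]
      · intro i hi; fin_cases i <;> simp_all
      · right; simp
    · push_neg at hB
      by_cases hC : p 4 ≤ p 0
      · refine ⟨![p 0, 0, 0, p 0 - p 4, p 4], ⟨?_, ?_, {1,2,3}, ?_, ?_⟩, ?_⟩
        · intro h
          have h1 := congrFun h 1; have h2 := congrFun h 2; have h3 := congrFun h 3
          simp at h1 h2 h3
          exact hp.1.elim (fun h => h h1.symm) (fun h => h.elim (fun h => h h2.symm) (fun h => h (by omega)))
        · intro i; fin_cases i <;> simp <;> omega
        · simp [PN53]
        · intro i hi; fin_cases i <;> simp_all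
        · left; simp; omega
      · push_neg at hC
        refine ⟨![p 0, p 4 - p 0, 0, 0, p 4], ⟨?_, ?_, {1,2,3}, ?_, ?_⟩, ?_⟩
        · intro h
          have h1 := congrFun h 1; have h2 := congrFun h 2; have h3 := congrFun h 3
          simp at h1 h2 h3
          exact hp.2.elim (fun h => h h2.symm) (fun h => h.elim (fun h => h h3.symm) (fun h => h (by omega)))
        · intro i; fin_cases i <;> simp <;> omega
        · simp [PN53]
        · intro i hi; fin_cases i <;> simp_all
        · right; simp; omega

/-- Main induction on the total number of tokens. -/
lemma key : ∀ n (p : Fin 5 → ℕ), Finset.univ.sum p = n → (PPos PN53 p ↔ Sp p) := by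
  intro n
  induction n using Nat.strong_induction_on with
  | _ n IH =>
    intro p hn
    rw [PPos]
    constructor
    · intro h
      by_contra hS
      obtain ⟨q, hmove, hSq⟩ := stratS hS
      have hlt : Finset.univ.sum q < n := hn ▸ move_sum_lt hmove
      exact h q hmove ((IH _ hlt q rfl).mpr hSq)
    · intro hS q hmove hPq
      have hlt : Finset.univ.sum q < n := hn ▸ move_sum_lt hmove
      exact moveS hS hmove ((IH _ hlt q rfl).mp hPq)

/-- the P-positions of PN(5,3) are exactly the positions
(a,0,0,b₁,b₂) with a = b₁+b₂ or (a₁,a₂,0,0,b) with a₁+a₂ = b. -/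
theorem pn53_ppos (p : Fin 5 → ℕ) :
    PPos PN53 p ↔
      (p 1 = 0 ∧ p 2 = 0 ∧ p 0 = p 3 + p 4) ∨
      (p 2 = 0 ∧ p 3 = 0 ∧ p 0 + p 1 = p 4) := key _ p rfl
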